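/- For every n ≥ 1, n! · 2^(n+1) · ∫₀¹ 1/(1+x²)^(n+1) dx − π·(2n)! / (2^(n+1)·n!) = (n−1)! · Σ_{k=0}^{n−1} binom(2n−1,2k) / binom(n−1,k). -/

import Mathlib

open Real intervalIntegral

lemma cont_integrand (m : ℕ) : Continuous fun x : ℝ => 1 / (1 + x ^ 2) ^ m := by
  apply Continuous.div continuous_const (by fun_prop)
  intro x
  positivity

lemma int_rec (j : ℕ) :
    (2 * (j : ℝ) + 2) * ∫ x in (0:ℝ)..1, 1 / (1 + x ^ 2) ^ (j + 2)
      = 1 / 2 ^ (j + 1) + (2 * (j : ℝ) + 1) * ∫ x in (0:ℝ)..1, 1 / (1 + x ^ 2) ^ (j + 1) := by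
  have key : ∫ x in (0:ℝ)..1,
      ((2 * (j : ℝ) + 2) * (1 / (1 + x ^ 2) ^ (j + 2))
        - (2 * (j : ℝ) + 1) * (1 / (1 + x ^ 2) ^ (j + 1))) = 1 / 2 ^ (j + 1) := by
    have hderiv : ∀ x ∈ Set.uIcc (0:ℝ) 1,
        HasDerivAt (fun x : ℝ => x / (1 + x ^ 2) ^ (j + 1))
          ((2 * (j : ℝ) + 2) * (1 / (1 + x ^ 2) ^ (j + 2))
            - (2 * (j : ℝ) + 1) * (1 / (1 + x ^ 2) ^ (j + 1))) x := by
      intro x _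
      have h0 : (0:ℝ) < 1 + x ^ 2 := by positivity
      have hinner : HasDerivAt (fun x : ℝ => 1 + x ^ 2) (2 * x) x := by
        simpa using ((hasDerivAt_pow 2 x).const_add 1)
      have hpow : HasDerivAt (fun x : ℝ => (1 + x ^ 2) ^ (j + 1))
          ((j + 1 : ℕ) * (1 + x ^ 2) ^ j * (2 * x)) x := by
        simpa using hinner.fun_pow (j + 1)
      have hd : HasDerivAt (fun y : ℝ => y / (1 + y ^ 2) ^ (j + 1)) _ x :=
        (hasDerivAt_id x).fun_div hpow (by positivity)
      convert hd using 1
      have hne : (1 + x ^ 2) ≠ 0 := ne_of_gt h0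
      simp only [id_eq, Nat.cast_add, Nat.cast_one]
      field_simp
      ring
    rw [integral_eq_sub_of_hasDerivAt hderiv]
    · norm_num
    · exact ((continuous_const.fun_mul (cont_integrand (j+2))).sub
        (continuous_const.fun_mul (cont_integrand (j+1)))).intervalIntegrable _ _
  rw [intervalIntegral.integral_sub ((continuous_const.fun_mul (cont_integrand (j+2))).intervalIntegrable _ _)
      ((continuous_const.fun_mul (cont_integrand (j+1))).intervalIntegrable _ _),
    intervalIntegral.integral_const_mul, intervalIntegral.integral_const_mul] at key
  linarith

lemma int_base : ∫ x in (0:ℝ)..1, 1 / (1 + x ^ 2) ^ 1 = π / 4 := by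
  simp only [pow_one]
  rw [integral_one_div_one_add_sq]
  simp [Real.arctan_one]

open Nat Finset

lemma fac_even (k : ℕ) : (2 * k)! = 2 ^ k * k ! * (2 * k - 1)‼ := by
  cases k with
  | zero => rfl
  | succ s =>
    have h1 : 2 * (s + 1) = (2 * s + 1) + 1 := by ring
    rw [h1, Nat.factorial_eq_mul_doubleFactorial]
    have h2 : 2 * s + 1 + 1 = 2 * (s + 1) := by ring
    rw [h2, Nat.doubleFactorial_two_mul]
    have h3 : 2 * (s + 1) - 1 = 2 * s + 1 := by omega
    rw [h3]

lemma fac_odd (j : ℕ) : (2 * j + 1)! = (2 * j + 1)‼ * (2 ^ j * j !) := by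
  rw [Nat.factorial_eq_mul_doubleFactorial, Nat.doubleFactorial_two_mul]

/-- Conversion of the binomial ratio to double factorials. -/
lemma conv (k j : ℕ) :
    (((2 * (k + j) + 1).choose (2 * k) : ℝ)) / ((k + j).choose k : ℝ)
      = ((2 * (k + j) + 1)‼ : ℝ) / (((2 * k - 1)‼ : ℝ) * ((2 * j + 1)‼ : ℝ)) := by
  have h1 : ((2 * (k + j) + 1).choose (2 * k) : ℝ)
      = ((2 * (k + j) + 1)! : ℝ) / (((2 * k)! : ℝ) * ((2 * j + 1)! : ℝ)) := by
    rw [Nat.cast_choose ℝ (by omega : 2 * k ≤ 2 * (k + j) + 1),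
      show 2 * (k + j) + 1 - 2 * k = 2 * j + 1 from by omega]
  have h2 : (((k + j).choose k : ℝ)) = ((k + j)! : ℝ) / ((k ! : ℝ) * (j ! : ℝ)) := by
    rw [Nat.cast_choose ℝ (by omega : k ≤ k + j),
      show k + j - k = j from by omega]
  rw [h1, h2]
  have e1 : ((2 * (k + j) + 1)! : ℝ) = ((2 * (k + j) + 1)‼ : ℝ) * (2 ^ (k + j) * ((k+j)! : ℝ)) := by
    rw_mod_cast [fac_odd (k + j)]
  have e2 : ((2 * k)! : ℝ) = 2 ^ k * (k ! : ℝ) * ((2 * k - 1)‼ : ℝ) := by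
    rw_mod_cast [fac_even k]
  have e3 : ((2 * j + 1)! : ℝ) = ((2 * j + 1)‼ : ℝ) * (2 ^ j * (j ! : ℝ)) := by
    rw_mod_cast [fac_odd j]
  rw [e1, e2, e3]
  have p1 : (0:ℝ) < (k ! : ℝ) := by positivity
  have p2 : (0:ℝ) < (j ! : ℝ) := by positivity
  have p3 : (0:ℝ) < ((k+j)! : ℝ) := by positivity
  have p4 : (0:ℝ) < ((2 * k - 1)‼ : ℝ) := by exact_mod_cast Nat.doubleFactorial_pos _
  have p5 : (0:ℝ) < ((2 * j + 1)‼ : ℝ) := by exact_mod_cast Nat.doubleFactorial_pos _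
  have p6 : (0:ℝ) < (2:ℝ) ^ k := by positivity
  have p7 : (0:ℝ) < (2:ℝ) ^ j := by positivity
  field_simp
  ring

/-- Telescoping certificate. -/
lemma step (k p : ℕ) :
    ((k:ℝ) + p + 1) * (((2 * k + 2 * p + 3)‼ : ℝ) / (((2 * k - 1)‼ : ℝ) * ((2 * p + 3)‼ : ℝ)))
      - (2 * (k:ℝ) + 2 * p + 3) *
        (((2 * k + 2 * p + 1)‼ : ℝ) / (((2 * k - 1)‼ : ℝ) * ((2 * p + 1)‼ : ℝ)))
    = (2 * (k:ℝ) + 2 * p + 3) * ((2 * k + 2 * p + 1)‼ : ℝ) * (1 - 2 * ((k:ℝ) + 1)) /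
        (2 * ((2 * (k + 1) - 1)‼ : ℝ) * ((2 * p + 1)‼ : ℝ))
      - (2 * (k:ℝ) + 2 * p + 3) * ((2 * k + 2 * p + 1)‼ : ℝ) * (1 - 2 * (k:ℝ)) /
        (2 * ((2 * k - 1)‼ : ℝ) * ((2 * p + 3)‼ : ℝ)) := by
  have ek : (2 * (k + 1) - 1)‼ = (2 * k + 1) * (2 * k - 1)‼ := by
    have : 2 * (k + 1) - 1 = 2 * k + 1 := by omega
    rw [this]
    cases k with
    | zero => rfl
    | succ s =>
      have h1 : 2 * (s + 1) + 1 = (2 * s + 1) + 2 := by ring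
      have h2 : 2 * (s + 1) - 1 = 2 * s + 1 := by omega
      rw [h1, h2, Nat.doubleFactorial_add_two]
  have ep : (2 * p + 3)‼ = (2 * p + 3) * (2 * p + 1)‼ := by
    have : 2 * p + 3 = (2 * p + 1) + 2 := by ring
    rw [this, Nat.doubleFactorial_add_two]
  have eB : (2 * k + 2 * p + 3)‼ = (2 * k + 2 * p + 3) * (2 * k + 2 * p + 1)‼ := by
    have : 2 * k + 2 * p + 3 = (2 * k + 2 * p + 1) + 2 := by ring
    rw [this, Nat.doubleFactorial_add_two]
  rw [ek, ep, eB]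
  have p1 : (0:ℝ) < ((2 * k - 1)‼ : ℝ) := by exact_mod_cast Nat.doubleFactorial_pos _
  have p2 : (0:ℝ) < ((2 * p + 1)‼ : ℝ) := by exact_mod_cast Nat.doubleFactorial_pos _
  have p3 : (0:ℝ) < ((2 * k + 2 * p + 1)‼ : ℝ) := by exact_mod_cast Nat.doubleFactorial_pos _
  push_cast
  have h1 : (2 * (k:ℝ) + 1) ≠ 0 := by positivity
  have h2 : (2 * (p:ℝ) + 3) ≠ 0 := by positivity
  field_simp
  ring

/-- the recurrence for the sums. -/
lemma comb_rec (n : ℕ) (hn : 1 ≤ n) :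
    (∑ k ∈ Finset.range (n + 1), ((2 * n + 1).choose (2 * k) : ℝ) / (n.choose k : ℝ)) * n
      = (2 * (n:ℝ) + 1) *
          (∑ k ∈ Finset.range n, ((2 * n - 1).choose (2 * k) : ℝ) / ((n - 1).choose k : ℝ)) + n := by
  -- convert both sums to double-factorial form
  have T1 : ∑ k ∈ Finset.range (n + 1), ((2 * n + 1).choose (2 * k) : ℝ) / (n.choose k : ℝ)
      = ∑ k ∈ Finset.range (n + 1),
          ((2 * n + 1)‼ : ℝ) / (((2 * k - 1)‼ : ℝ) * ((2 * (n - k) + 1)‼ : ℝ)) := by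
    apply Finset.sum_congr rfl
    intro k hk
    have hk' : k ≤ n := by simpa using Nat.lt_succ_iff.mp (Finset.mem_range.mp hk)
    have := conv k (n - k)
    rw [show k + (n - k) = n from by omega] at this
    exact this
  have T2 : ∑ k ∈ Finset.range n, ((2 * n - 1).choose (2 * k) : ℝ) / ((n - 1).choose k : ℝ)
      = ∑ k ∈ Finset.range n,
          ((2 * n - 1)‼ : ℝ) / (((2 * k - 1)‼ : ℝ) * ((2 * (n - 1 - k) + 1)‼ : ℝ)) := by
    apply Finset.sum_congr rfl
    intro k hk
    have hk' : k ≤ n - 1 := by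
      have := Finset.mem_range.mp hk; omega
    have := conv k (n - 1 - k)
    rw [show k + (n - 1 - k) = n - 1 from by omega,
      show 2 * (n - 1) + 1 = 2 * n - 1 from by omega] at this
    exact this
  rw [T1, T2]
  -- telescoping
  set G : ℕ → ℝ := fun k =>
    (2 * (n:ℝ) + 1) * ((2 * n - 1)‼ : ℝ) * (1 - 2 * (k:ℝ)) /
      (2 * ((2 * k - 1)‼ : ℝ) * ((2 * n + 1 - 2 * k)‼ : ℝ)) with hG
  have tele : ∑ k ∈ Finset.range n,
      ((n:ℝ) * (((2 * n + 1)‼ : ℝ) / (((2 * k - 1)‼ : ℝ) * ((2 * (n - k) + 1)‼ : ℝ)))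
        - (2 * (n:ℝ) + 1) *
            (((2 * n - 1)‼ : ℝ) / (((2 * k - 1)‼ : ℝ) * ((2 * (n - 1 - k) + 1)‼ : ℝ))))
      = G n - G 0 := by
    rw [← Finset.sum_range_sub G n]
    apply Finset.sum_congr rfl
    intro k hk
    have hkn : k < n := Finset.mem_range.mp hk
    obtain ⟨p, hp⟩ : ∃ p, n = k + p + 1 := ⟨n - k - 1, by omega⟩
    subst hp
    have e1 : 2 * (k + p + 1) + 1 = 2 * k + 2 * p + 3 := by ring
    have e2 : 2 * ((k + p + 1) - k) + 1 = 2 * p + 3 := by omega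
    have e3 : 2 * (k + p + 1) - 1 = 2 * k + 2 * p + 1 := by omega
    have e4 : 2 * ((k + p + 1) - 1 - k) + 1 = 2 * p + 1 := by omega
    have e5 : 2 * (k + p + 1) + 1 - 2 * (k + 1) = 2 * p + 1 := by omega
    have e6 : 2 * (k + p + 1) + 1 - 2 * k = 2 * p + 3 := by omega
    have hGk : G k = (2 * ((k:ℝ) + p + 1) + 1) * ((2 * (k + p + 1) - 1)‼ : ℝ) * (1 - 2 * (k:ℝ)) /
        (2 * ((2 * k - 1)‼ : ℝ) * ((2 * (k + p + 1) + 1 - 2 * k)‼ : ℝ)) := by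
      rw [hG]; push_cast; ring
    have hGk1 : G (k + 1) = (2 * ((k:ℝ) + p + 1) + 1) * ((2 * (k + p + 1) - 1)‼ : ℝ) *
        (1 - 2 * ((k:ℝ) + 1)) /
        (2 * ((2 * (k + 1) - 1)‼ : ℝ) * ((2 * (k + p + 1) + 1 - 2 * (k + 1))‼ : ℝ)) := by
      rw [hG]; push_cast; ring
    rw [hGk, hGk1, e5, e6, e2, e4, e1, e3]
    all_goals
      have hst := step k p
      push_cast at hst ⊢
      linear_combination hst
  -- endpoint values
  have hdf : (2 * n + 1)‼ = (2 * n + 1) * (2 * n - 1)‼ := by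
    have h : 2 * n + 1 = (2 * n - 1) + 2 := by omega
    rw [h, Nat.doubleFactorial_add_two]
  have p1 : (0:ℝ) < ((2 * n - 1)‼ : ℝ) := by exact_mod_cast Nat.doubleFactorial_pos _
  have hG0 : G 0 = 1 / 2 := by
    have h1 : G 0 = (2 * (n:ℝ) + 1) * ((2 * n - 1)‼ : ℝ) * (1 - 2 * ((0:ℕ):ℝ)) /
        (2 * ((2 * 0 - 1)‼ : ℝ) * ((2 * n + 1 - 2 * 0)‼ : ℝ)) := rfl
    rw [h1, show (2 * 0 - 1 : ℕ) = 0 from rfl, show 2 * n + 1 - 2 * 0 = 2 * n + 1 from by omega,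
      hdf]
    push_cast
    simp only [Nat.doubleFactorial]
    field_simp
    ring
  have hGn : G n = (2 * (n:ℝ) + 1) * (1 - 2 * (n:ℝ)) / 2 := by
    have h1 : G n = (2 * (n:ℝ) + 1) * ((2 * n - 1)‼ : ℝ) * (1 - 2 * (n:ℝ)) /
        (2 * ((2 * n - 1)‼ : ℝ) * ((2 * n + 1 - 2 * n)‼ : ℝ)) := rfl
    rw [h1, show 2 * n + 1 - 2 * n = 1 from by omega, show (1:ℕ)‼ = 1 from rfl]
    push_cast
    field_simp
  -- last term of the big sum
  have hlast : ((2 * n + 1)‼ : ℝ) / (((2 * n - 1)‼ : ℝ) * ((2 * (n - n) + 1)‼ : ℝ))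
      = 2 * (n:ℝ) + 1 := by
    rw [show 2 * (n - n) + 1 = 1 from by omega, show (1:ℕ)‼ = 1 from rfl, hdf]
    push_cast
    field_simp
  rw [Finset.sum_range_succ, hlast]
  rw [Finset.sum_sub_distrib, ← Finset.mul_sum, ← Finset.mul_sum] at tele
  rw [hG0, hGn] at tele
  nlinarith [tele]

theorem A087547_integral_formula (n : ℕ) (hn : 1 ≤ n) :
    (n.factorial : ℝ) * 2 ^ (n + 1) * (∫ x in (0 : ℝ)..1, 1 / (1 + x ^ 2) ^ (n + 1)) -
        Real.pi * ((2 * n).factorial : ℝ) / (2 ^ (n + 1) * n.factorial) =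
      ((n - 1).factorial : ℝ) *
        ∑ k ∈ Finset.range n, (((2 * n - 1).choose (2 * k) : ℝ)) / ((n - 1).choose k) := by
  induction n, hn using Nat.le_induction with
  | base =>
    have h1 := int_rec 0
    norm_num at h1 ⊢
    linarith
  | succ n hn ih =>
    have ht : ((2:ℝ)) ^ (n + 1) ≠ 0 := by positivity
    have hF : ((n ! : ℝ)) ≠ 0 := by positivity
    have hn1 : ((n:ℝ) + 1) ≠ 0 := by positivity
    -- normalize index arithmetic in the goal
    simp only [show (n + 1) - 1 = n from by omega, show 2 * (n + 1) - 1 = 2 * n + 1 from by omega]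
    have h1 := int_rec n
    have h3 := comb_rec n hn
    have h4 : (n:ℝ) * ((n - 1)! : ℝ) = (n ! : ℝ) := by
      exact_mod_cast congrArg (Nat.cast (R := ℝ)) (Nat.mul_factorial_pred (by omega))
    have c1 : (((n+1)! : ℕ) : ℝ) = ((n:ℝ) + 1) * (n ! : ℝ) := by
      rw [Nat.factorial_succ]; push_cast; ring
    have c2 : (((2*(n+1))! : ℕ) : ℝ) = (2*(n:ℝ)+2) * ((2*(n:ℝ)+1) * ((2*n)! : ℝ)) := by
      rw [show 2*(n+1) = (2*n+1)+1 from by ring, Nat.factorial_succ,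
        show (2*n+1) = (2*n)+1 from rfl, Nat.factorial_succ]
      push_cast; ring
    set A := ∫ x in (0:ℝ)..1, 1 / (1 + x ^ 2) ^ (n + 1) with hA
    set B := ∫ x in (0:ℝ)..1, 1 / (1 + x ^ 2) ^ (n + 1 + 1) with hB
    set S := ∑ k ∈ Finset.range n, ((2 * n - 1).choose (2 * k) : ℝ) / ((n - 1).choose k : ℝ)
      with hS
    set S' := ∑ k ∈ Finset.range (n + 1), ((2 * n + 1).choose (2 * k) : ℝ) / (n.choose k : ℝ)
      with hS'
    -- s1 : the integral recurrence, cleared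
    have s1 : (((n+1)! : ℕ) : ℝ) * 2^(n+1+1) * B
        = (n ! : ℝ) + (2*(n:ℝ)+1) * ((n ! : ℝ) * 2^(n+1) * A) := by
      have e : (((n+1)! : ℕ) : ℝ) * 2^(n+1+1) * B
          = ((n ! : ℝ) * 2^(n+1)) * ((2*(n:ℝ)+2) * B) := by
        rw [c1, pow_succ]; ring
      rw [e, h1]
      field_simp
    -- s2 : the pi-term identity
    have s2 : Real.pi * (((2*(n+1))! : ℕ) : ℝ) / (2^(n+1+1) * (((n+1)! : ℕ) : ℝ))
        = (2*(n:ℝ)+1) * (Real.pi * ((2*n)! : ℝ) / (2^(n+1) * (n ! : ℝ))) := by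
      rw [c1, c2, pow_succ]
      field_simp
    linear_combination s1 - s2 + (2*(n:ℝ)+1) * ih + (-((n-1)! : ℝ)) * h3 + (S' - 1) * h4
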